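/- Let ν₀ = 1 and ν₁, ν₂, … be scalars, and suppose elements e_n, f_n, K^{±1} of an associative algebra over ℚ(q) satisfy, for all k, l > 0, Σ_{n=0}^{min(k,l)} q^{n(s-m)} ν_n K^{-n} e_s f_m = Σ_{n=0}^{min(k,l)} q^{n(m-s)} ν_n K^n f_m e_s where m = k - n, s = l - n, together with K e_m K⁻¹ = q^{2m} e_m and K f_m K⁻¹ = q^{-2m} f_m. Then for all k, l > 0: e_l f_k - f_k e_l = Σ_{p=1}^{min(k,l)} ( Σ_{r=1}^{p} ν_r θ_{p-r} (q^{k-l} K)^{r-p} ((q^{k-l}K)^r - (q^{k-l}K)^{-r}) ) f_{k-p} e_{l-p}, where θ_m = Σ_{c ∈ C_m} (-1)^{||c||} ν_c is the signed composition sum. -/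

import Mathlib

open scoped BigOperators
open Finset

/-- The signed composition sum `θ_m = ∑_{c ∈ C_m} (-1)^{‖c‖} ν_c` (so `θ₀ = 1`). -/
noncomputable def compTheta (ν : ℕ → RatFunc ℚ) (m : ℕ) : RatFunc ℚ :=
  ∑ c : Composition m, (-1 : RatFunc ℚ) ^ c.length * (c.blocks.map ν).prod

/-- `K^z` for `z : ℤ`, written via `K` and its inverse `Kinv`. -/
noncomputable def Kzpow {R : Type*} [Ring R] (K Kinv : R) (z : ℤ) : R :=
  K ^ z.toNat * Kinv ^ (-z).toNat

lemma compTheta_zero (ν : ℕ → RatFunc ℚ) : compTheta ν 0 = 1 := by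
  have hb : ∀ c : Composition 0, c.blocks = [] := by
    intro c
    cases hc : c.blocks with
    | nil => rfl
    | cons b t =>
      exfalso
      have hp := c.blocks_pos (hc ▸ (List.mem_cons_self : b ∈ b :: t))
      have h1 := c.blocks_sum
      rw [hc] at h1
      simp at h1
      omega
  rw [compTheta]
  calc (∑ c : Composition 0, (-1 : RatFunc ℚ) ^ c.length * (c.blocks.map ν).prod)
      = ∑ _c : Composition 0, (1 : RatFunc ℚ) :=
        Finset.sum_congr rfl fun c _ => by
          simp [Composition.length, hb c]
    _ = 1 := by simp [Finset.card_univ, composition_card]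

/-- prepend a block `j+1` to a composition of `m - j`. -/
def compCons (m : ℕ) (j : Fin (m + 1)) (c : Composition (m - j)) : Composition (m + 1) :=
  ⟨(j + 1) :: c.blocks,
   by
     intro i hi
     rw [List.mem_cons] at hi
     rcases hi with hi | hi
     · omega
     · exact c.blocks_pos hi,
   by
     have hj : (j : ℕ) ≤ m := Nat.lt_succ_iff.mp j.isLt
     simp [c.blocks_sum]; omega⟩

lemma compCons_bijective (m : ℕ) :
    Function.Bijective (fun x : Σ j : Fin (m + 1), Composition (m - j) =>
      compCons m x.1 x.2) := by
  constructor
  · rintro ⟨j, c⟩ ⟨j', c'⟩ h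
    have hb : ((j : ℕ) + 1) :: c.blocks = ((j' : ℕ) + 1) :: c'.blocks :=
      congrArg Composition.blocks h
    have hj : (j : ℕ) = (j' : ℕ) := by simpa using congrArg List.headI hb
    have hj' : j = j' := Fin.ext hj
    subst hj'
    have hc : c.blocks = c'.blocks := by simpa using congrArg List.tail hb
    have : c = c' := Composition.ext hc
    subst this; rfl
  · intro c
    rcases hb : c.blocks with _ | ⟨b, t⟩
    · exfalso
      have := c.blocks_sum
      rw [hb] at this
      simp at this
    · have hbpos : 0 < b := c.blocks_pos (by rw [hb]; exact List.mem_cons_self)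
      have hsum : b + t.sum = m + 1 := by
        have := c.blocks_sum; rw [hb] at this; simpa using this
      have hble : b ≤ m + 1 := by omega
      refine ⟨⟨⟨b - 1, by omega⟩, ⟨t, ?_, ?_⟩⟩, ?_⟩
      · intro i hi; exact c.blocks_pos (by rw [hb]; exact List.mem_cons_of_mem _ hi)
      · simp only; omega
      · apply Composition.ext
        simp only [compCons]
        rw [hb]
        congr 1
        omega

lemma compTheta_rec (ν : ℕ → RatFunc ℚ) (m : ℕ) (hm : 1 ≤ m) :
    ∑ n ∈ Icc 1 m, ν n * compTheta ν (m - n) = - compTheta ν m := by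
  obtain ⟨m', rfl⟩ : ∃ m', m = m' + 1 := ⟨m - 1, by omega⟩
  have key : compTheta ν (m' + 1)
      = ∑ x : Σ j : Fin (m' + 1), Composition (m' - j),
          (-1 : RatFunc ℚ) ^ (compCons m' x.1 x.2).length
            * ((compCons m' x.1 x.2).blocks.map ν).prod := by
    rw [compTheta]
    exact (Fintype.sum_bijective _ (compCons_bijective m') _ _ (fun x => rfl)).symm
  have key2 : compTheta ν (m' + 1)
      = - ∑ j : Fin (m' + 1), ν ((j : ℕ) + 1) * compTheta ν (m' - j) := by
    rw [key, ← Finset.univ_sigma_univ, Finset.sum_sigma, ← Finset.sum_neg_distrib]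
    refine Finset.sum_congr rfl fun j _ => ?_
    rw [compTheta, Finset.mul_sum, ← Finset.sum_neg_distrib]
    refine Finset.sum_congr rfl fun c _ => ?_
    simp only [compCons, Composition.length, List.length_cons, List.map_cons, List.prod_cons]
    ring
  rw [key2, neg_neg]
  rw [Fin.sum_univ_eq_sum_range (fun j => ν (j + 1) * compTheta ν (m' - j)) (m' + 1)]
  refine Finset.sum_nbij' (fun n => n - 1) (fun j => j + 1) ?_ ?_ ?_ ?_ ?_
  · intro a ha; simp only [Finset.mem_Icc] at ha; simp only [Finset.mem_range]; omega
  · intro a ha; simp only [Finset.mem_range] at ha; simp only [Finset.mem_Icc]; omega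
  · intro a ha; simp only [Finset.mem_Icc] at ha; omega
  · intro a ha; omega
  · intro a ha; simp only [Finset.mem_Icc] at ha
    congr 1
    · congr 1; omega
    · congr 1; omega

noncomputable def Kz {R : Type*} [Ring R] (u : Rˣ) (z : ℤ) : R := ((u ^ z : Rˣ) : R)

lemma Kz_add {R : Type*} [Ring R] (u : Rˣ) (a b : ℤ) :
    Kz u (a + b) = Kz u a * Kz u b := by
  simp [Kz, zpow_add]

lemma Kz_natCast {R : Type*} [Ring R] (u : Rˣ) (n : ℕ) : Kz u (n : ℤ) = (u : R) ^ n := by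
  simp [Kz, zpow_natCast]

lemma Kz_neg_natCast {R : Type*} [Ring R] (u : Rˣ) (n : ℕ) :
    Kz u (-(n : ℤ)) = ((u⁻¹ : Rˣ) : R) ^ n := by
  rw [Kz, zpow_neg, zpow_natCast, ← inv_pow, Units.val_pow_eq_pow_val]

lemma Kzpow_eq_Kz {R : Type*} [Ring R] (K Kinv : R) (hK : K * Kinv = 1) (hK' : Kinv * K = 1)
    (z : ℤ) : Kzpow K Kinv z = Kz ⟨K, Kinv, hK, hK'⟩ z := by
  cases z with
  | ofNat n => simp [Kzpow, Kz, zpow_natCast]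
  | negSucc n =>
    have h1 : (Int.negSucc n).toNat = 0 := rfl
    have h2 : (-(Int.negSucc n)).toNat = n + 1 := rfl
    rw [Kzpow, h1, h2, Kz, zpow_negSucc, pow_zero, one_mul, ← inv_pow, Units.val_pow_eq_pow_val]
    rfl


section helpers

variable {M : Type*} [AddCommMonoid M]

lemma sum_Icc_one_eq_sum_range (N : ℕ) (F : ℕ → M) :
    ∑ n ∈ Icc 1 N, F n = ∑ j ∈ range N, F (j + 1) := by
  refine Finset.sum_nbij' (fun n => n - 1) (fun j => j + 1) ?_ ?_ ?_ ?_ ?_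
  · intro a ha; simp only [Finset.mem_Icc] at ha; simp only [Finset.mem_range]; omega
  · intro a ha; simp only [Finset.mem_range] at ha; simp only [Finset.mem_Icc]; omega
  · intro a ha; simp only [Finset.mem_Icc] at ha; omega
  · intro a ha; omega
  · intro a ha; simp only [Finset.mem_Icc] at ha
    congr 1
    omega

lemma sum_swap_Icc (P : ℕ) (G : ℕ → ℕ → M) :
    ∑ m ∈ Icc 1 (P - 1), ∑ r ∈ Icc 1 (P - m), G m r
      = ∑ r ∈ Icc 1 (P - 1), ∑ m ∈ Icc 1 (P - r), G m r := by
  rw [Finset.sum_sigma', Finset.sum_sigma']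
  refine Finset.sum_nbij' (fun x => ⟨x.2, x.1⟩) (fun x => ⟨x.2, x.1⟩) ?_ ?_ ?_ ?_ ?_
  · rintro ⟨m, r⟩ hx
    simp only [Finset.mem_sigma, Finset.mem_Icc] at *
    omega
  · rintro ⟨r, m⟩ hx
    simp only [Finset.mem_sigma, Finset.mem_Icc] at *
    omega
  · rintro ⟨m, r⟩ _; rfl
  · rintro ⟨r, m⟩ _; rfl
  · rintro ⟨m, r⟩ _; rfl

lemma sum_pair_reindex (N : ℕ) (H : ℕ → ℕ → M) :
    ∑ m ∈ Icc 1 N, ∑ p ∈ Icc 1 (N - m), H m p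
      = ∑ P ∈ Icc 1 N, ∑ m ∈ Icc 1 (P - 1), H m (P - m) := by
  rw [Finset.sum_sigma', Finset.sum_sigma']
  refine Finset.sum_nbij' (fun x => ⟨x.1 + x.2, x.1⟩) (fun y => ⟨y.2, y.1 - y.2⟩) ?_ ?_ ?_ ?_ ?_
  · rintro ⟨m, p⟩ hx
    simp only [Finset.mem_sigma, Finset.mem_Icc] at *
    omega
  · rintro ⟨P, m⟩ hx
    simp only [Finset.mem_sigma, Finset.mem_Icc] at *
    omega
  · rintro ⟨m, p⟩ hx
    simp only [Finset.mem_sigma, Finset.mem_Icc] at hx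
    simp only [Sigma.mk.inj_iff, heq_eq_eq]
    constructor <;> first | trivial | omega
  · rintro ⟨P, m⟩ hx
    simp only [Finset.mem_sigma, Finset.mem_Icc] at hx
    simp only [Sigma.mk.inj_iff, heq_eq_eq]
    constructor <;> first | trivial | omega
  · rintro ⟨m, p⟩ hx
    simp only [Finset.mem_sigma, Finset.mem_Icc] at hx
    simp only
    congr 1
    omega

end helpers

lemma qcomb (e1 e2 e3 : ℤ) (h : e1 + e2 = e3) (c1 c2 : RatFunc ℚ) :
    (RatFunc.X : RatFunc ℚ) ^ e1 * c1 * ((RatFunc.X : RatFunc ℚ) ^ e2 * c2)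
      = (RatFunc.X : RatFunc ℚ) ^ e3 * (c1 * c2) := by
  rw [← h, zpow_add₀ RatFunc.X_ne_zero]
  ring

noncomputable def Cc {R : Type*} [Ring R] [Algebra (RatFunc ℚ) R] (u : Rˣ)
    (ν : ℕ → RatFunc ℚ) (a : ℤ) (p : ℕ) : R :=
  ∑ r ∈ Icc 1 p,
    (((RatFunc.X : RatFunc ℚ) ^ (a * (2 * (r : ℤ) - p)) * (ν r * compTheta ν (p - r))) •
        Kz u (2 * (r : ℤ) - p)
      - ((RatFunc.X : RatFunc ℚ) ^ (-(a * (p : ℤ))) * (ν r * compTheta ν (p - r))) •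
        Kz u (-(p : ℤ)))

lemma Cc_key {R : Type*} [Ring R] [Algebra (RatFunc ℚ) R] (u : Rˣ) (ν : ℕ → RatFunc ℚ)
    (kk ll : ℤ) (P : ℕ) (hP : 1 ≤ P) :
    Cc u ν (kk - ll) P =
      (((RatFunc.X : RatFunc ℚ) ^ ((P : ℤ) * (kk - ll)) * ν P) • Kz u (P : ℤ)
        - ((RatFunc.X : RatFunc ℚ) ^ ((P : ℤ) * (ll - kk)) * ν P) • Kz u (-(P : ℤ)))
      - ∑ m ∈ Icc 1 (P - 1),
          ((RatFunc.X : RatFunc ℚ) ^ ((m : ℤ) * (ll - kk)) * ν m) •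
            (Kz u (-(m : ℤ)) * Cc u ν (kk - ll) (P - m)) := by
  -- the r-th summand of `Cc u ν (kk-ll) P`
  set T : ℕ → R := fun r =>
    (((RatFunc.X : RatFunc ℚ) ^ ((kk - ll) * (2 * (r : ℤ) - P)) * (ν r * compTheta ν (P - r))) •
        Kz u (2 * (r : ℤ) - P)
      - ((RatFunc.X : RatFunc ℚ) ^ (-((kk - ll) * (P : ℤ))) * (ν r * compTheta ν (P - r))) •
        Kz u (-(P : ℤ))) with hT
  set G : ℕ → ℕ → R := fun m r =>
    (((RatFunc.X : RatFunc ℚ) ^ ((kk - ll) * (2 * (r : ℤ) - P)) *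
        (ν m * (ν r * compTheta ν (P - m - r)))) • Kz u (2 * (r : ℤ) - P)
      - ((RatFunc.X : RatFunc ℚ) ^ (-((kk - ll) * (P : ℤ))) *
        (ν m * (ν r * compTheta ν (P - m - r)))) • Kz u (-(P : ℤ))) with hG
  have hsum : ∑ m ∈ Icc 1 (P - 1),
      ((RatFunc.X : RatFunc ℚ) ^ ((m : ℤ) * (ll - kk)) * ν m) •
        (Kz u (-(m : ℤ)) * Cc u ν (kk - ll) (P - m))
      = ∑ m ∈ Icc 1 (P - 1), ∑ r ∈ Icc 1 (P - m), G m r := by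
    refine Finset.sum_congr rfl fun m hm => ?_
    simp only [Finset.mem_Icc] at hm
    have hc : ((P - m : ℕ) : ℤ) = (P : ℤ) - m := by
      have : m ≤ P := by omega
      push_cast [this]; ring
    rw [Cc, Finset.mul_sum, Finset.smul_sum]
    refine Finset.sum_congr rfl fun r hr => ?_
    rw [mul_sub (Kz u (-(m : ℤ))), smul_sub, mul_smul_comm, mul_smul_comm,
      smul_smul, smul_smul, ← Kz_add, ← Kz_add, hc]
    rw [qcomb ((m : ℤ) * (ll - kk)) ((kk - ll) * (2 * (r : ℤ) - ((P : ℤ) - m)))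
        ((kk - ll) * (2 * (r : ℤ) - P)) (by ring) (ν m) (ν r * compTheta ν (P - m - r))]
    rw [qcomb ((m : ℤ) * (ll - kk)) (-((kk - ll) * ((P : ℤ) - m)))
        (-((kk - ll) * (P : ℤ))) (by ring) (ν m) (ν r * compTheta ν (P - m - r))]
    rw [hG]
    congr 2
    · ring
    · ring
  rw [hsum, sum_swap_Icc]
  have hinner : ∀ r ∈ Icc 1 (P - 1), ∑ m ∈ Icc 1 (P - r), G m r = -(T r) := by
    intro r hr
    simp only [Finset.mem_Icc] at hr
    have hPr : 1 ≤ P - r := by omega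
    rw [hG]
    simp only
    rw [Finset.sum_sub_distrib, ← Finset.sum_smul, ← Finset.sum_smul]
    have hscal : ∀ (c : RatFunc ℚ), ∑ m ∈ Icc 1 (P - r), c * (ν m * (ν r * compTheta ν (P - m - r)))
        = -(c * (ν r * compTheta ν (P - r))) := by
      intro c
      have h1 : ∀ m, P - m - r = P - r - m := fun m => Nat.sub_right_comm P m r
      calc ∑ m ∈ Icc 1 (P - r), c * (ν m * (ν r * compTheta ν (P - m - r)))
          = (c * ν r) * ∑ m ∈ Icc 1 (P - r), ν m * compTheta ν (P - r - m) := by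
            rw [Finset.mul_sum]
            exact Finset.sum_congr rfl fun m _ => by rw [h1 m]; ring
        _ = (c * ν r) * (-(compTheta ν (P - r))) := by rw [compTheta_rec ν (P - r) hPr]
        _ = -(c * (ν r * compTheta ν (P - r))) := by ring
    rw [hscal, hscal, hT]
    simp only [neg_smul]
    abel
  rw [Finset.sum_congr rfl hinner]
  have hsplit : ∑ r ∈ Icc 1 P, T r = (∑ r ∈ Icc 1 (P - 1), T r) + T P := by
    obtain ⟨Q, rfl⟩ : ∃ Q, P = Q + 1 := ⟨P - 1, by omega⟩
    rw [Finset.sum_Icc_succ_top (by omega : 1 ≤ Q + 1)]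
    simp
  have hTP : T P = ((RatFunc.X : RatFunc ℚ) ^ ((P : ℤ) * (kk - ll)) * ν P) • Kz u (P : ℤ)
      - ((RatFunc.X : RatFunc ℚ) ^ ((P : ℤ) * (ll - kk)) * ν P) • Kz u (-(P : ℤ)) := by
    rw [hT]
    simp only [Nat.sub_self, compTheta_zero, mul_one]
    congr 2
    · congr 1
      ring
    · congr 1
      ring
    · congr 1
      ring
  have hCc : Cc u ν (kk - ll) P = ∑ r ∈ Icc 1 P, T r := rfl
  rw [hCc, hsplit, hTP, Finset.sum_neg_distrib]
  abel

/-- The explicit commutation formula between `e_{il}` and `f_{ik}` in a quantum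
Borcherds-Bozec algebra for an imaginary index `i`: from the relations
`∑_{n=0}^{min(k,l)} q^{n(s-m)} ν_n K^{-n} e_s f_m = ∑_n q^{n(m-s)} ν_n K^n f_m e_s`
(`m = k-n`, `s = l-n`), one deduces
`e_l f_k - f_k e_l = ∑_{p=1}^{min(k,l)} (∑_{r=1}^p ν_r θ_{p-r} (q^{k-l}K)^{r-p}((q^{k-l}K)^r - (q^{k-l}K)^{-r})) f_{k-p} e_{l-p}`,
where `(q^{k-l}K)^{r-p}((q^{k-l}K)^r - (q^{k-l}K)^{-r}) = q^{(k-l)(2r-p)} K^{2r-p} - q^{-(k-l)p} K^{-p}`. -/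
theorem commutation_general_case (R : Type*) [Ring R] [Algebra (RatFunc ℚ) R]
    (K Kinv : R) (e f : ℕ → R) (ν : ℕ → RatFunc ℚ)
    (hK : K * Kinv = 1) (hK' : Kinv * K = 1)
    (he0 : e 0 = 1) (hf0 : f 0 = 1) (hν0 : ν 0 = 1)
    (hKe : ∀ m, K * e m * Kinv = (RatFunc.X : RatFunc ℚ) ^ (2 * m) • e m)
    (hKf : ∀ m, K * f m * Kinv = ((RatFunc.X : RatFunc ℚ) ^ (-(2 * m : ℤ))) • f m)
    (hrel : ∀ k l : ℕ, 1 ≤ k → 1 ≤ l →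
      ∑ n ∈ Finset.range (min k l + 1),
          ((RatFunc.X : RatFunc ℚ) ^ ((n : ℤ) * ((l : ℤ) - k)) * ν n) •
            (Kinv ^ n * (e (l - n) * f (k - n))) =
      ∑ n ∈ Finset.range (min k l + 1),
          ((RatFunc.X : RatFunc ℚ) ^ ((n : ℤ) * ((k : ℤ) - l)) * ν n) •
            (K ^ n * (f (k - n) * e (l - n)))) :
    ∀ k l : ℕ, 1 ≤ k → 1 ≤ l →
      e l * f k - f k * e l =
        ∑ p ∈ Finset.Icc 1 (min k l),
          (∑ r ∈ Finset.Icc 1 p,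
              (((RatFunc.X : RatFunc ℚ) ^ (((k : ℤ) - l) * (2 * (r : ℤ) - p)) *
                  (ν r * compTheta ν (p - r))) • Kzpow K Kinv (2 * (r : ℤ) - p) -
               ((RatFunc.X : RatFunc ℚ) ^ (-(((k : ℤ) - l) * p)) *
                  (ν r * compTheta ν (p - r))) • Kzpow K Kinv (-(p : ℤ)))) *
            (f (k - p) * e (l - p)) := by
  set u : Rˣ := ⟨K, Kinv, hK, hK'⟩ with hu
  have hKz : ∀ z, Kzpow K Kinv z = Kz u z := fun z => Kzpow_eq_Kz K Kinv hK hK' z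
  have hKn : ∀ n : ℕ, K ^ n = Kz u (n : ℤ) := fun n => (Kz_natCast u n).symm
  have hKin : ∀ n : ℕ, Kinv ^ n = Kz u (-(n : ℤ)) := fun n => (Kz_neg_natCast u n).symm
  have main : ∀ N : ℕ, ∀ k l : ℕ, min k l = N →
      e l * f k - f k * e l =
        ∑ p ∈ Icc 1 (min k l), Cc u ν ((k : ℤ) - l) p * (f (k - p) * e (l - p)) := by
    intro N
    induction N using Nat.strong_induction_on with
    | _ N IH =>
      intro k l hN
      rcases Nat.eq_zero_or_pos k with hk0 | hk
      · subst hk0; simp [hf0]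
      rcases Nat.eq_zero_or_pos l with hl0 | hl
      · subst hl0; simp [he0]
      have hNk : N ≤ k := by omega
      have hNl : N ≤ l := by omega
      have hN1 : 1 ≤ N := by omega
      -- step 0: extract n = 0 term from the defining relation
      have h0 : e l * f k - f k * e l
          = ∑ n ∈ range N, ((RatFunc.X : RatFunc ℚ) ^ (((n + 1 : ℕ) : ℤ) * ((k : ℤ) - l)) *
                ν (n + 1)) • (K ^ (n + 1) * (f (k - (n + 1)) * e (l - (n + 1))))
            - ∑ n ∈ range N, ((RatFunc.X : RatFunc ℚ) ^ (((n + 1 : ℕ) : ℤ) * ((l : ℤ) - k)) *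
                ν (n + 1)) • (Kinv ^ (n + 1) * (e (l - (n + 1)) * f (k - (n + 1)))) := by
        have h := hrel k l hk hl
        rw [hN] at h
        rw [Finset.sum_range_succ' _ N, Finset.sum_range_succ' _ N] at h
        simp only [Nat.cast_zero, zero_mul, zpow_zero, hν0, one_mul, pow_zero,
          Nat.sub_zero, one_smul] at h
        rw [sub_eq_sub_iff_add_eq_add]
        exact (add_comm _ _).trans h
      -- induction hypothesis in "e*f = f*e + corrections" form
      have hIH : ∀ n ∈ range N,
          e (l - (n + 1)) * f (k - (n + 1))
            = f (k - (n + 1)) * e (l - (n + 1))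
              + ∑ p ∈ Icc 1 (N - (n + 1)),
                  Cc u ν ((k : ℤ) - l) p *
                    (f (k - (n + 1) - p) * e (l - (n + 1) - p)) := by
        intro n hn
        simp only [Finset.mem_range] at hn
        have hlt : min (k - (n + 1)) (l - (n + 1)) < N := by omega
        have h := IH _ hlt (k - (n + 1)) (l - (n + 1)) rfl
        have hmin : min (k - (n + 1)) (l - (n + 1)) = N - (n + 1) := by omega
        have hcast : ((k - (n + 1) : ℕ) : ℤ) - ((l - (n + 1) : ℕ) : ℤ) = (k : ℤ) - l := by
          have h1 : n + 1 ≤ k := by omega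
          have h2 : n + 1 ≤ l := by omega
          push_cast [h1, h2]; ring
        rw [hmin, hcast] at h
        exact (sub_eq_iff_eq_add.mp h).trans (add_comm _ _)
      -- rewrite the A-sum using the induction hypothesis
      have hA : ∑ n ∈ range N, ((RatFunc.X : RatFunc ℚ) ^ (((n + 1 : ℕ) : ℤ) * ((l : ℤ) - k)) *
              ν (n + 1)) • (Kinv ^ (n + 1) * (e (l - (n + 1)) * f (k - (n + 1))))
          = ∑ n ∈ range N, ((RatFunc.X : RatFunc ℚ) ^ (((n + 1 : ℕ) : ℤ) * ((l : ℤ) - k)) *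
              ν (n + 1)) • (Kinv ^ (n + 1) * (f (k - (n + 1)) * e (l - (n + 1))))
            + ∑ n ∈ range N, ∑ p ∈ Icc 1 (N - (n + 1)),
                (((RatFunc.X : RatFunc ℚ) ^ (((n + 1 : ℕ) : ℤ) * ((l : ℤ) - k)) * ν (n + 1)) •
                  (Kz u (-((n + 1 : ℕ) : ℤ)) * Cc u ν ((k : ℤ) - l) p)) *
                  (f (k - ((n + 1) + p)) * e (l - ((n + 1) + p))) := by
        rw [← Finset.sum_add_distrib]
        refine Finset.sum_congr rfl fun n hn => ?_
        rw [hIH n hn, mul_add (Kinv ^ (n + 1)), smul_add]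
        congr 1
        rw [Finset.mul_sum, Finset.smul_sum]
        refine Finset.sum_congr rfl fun p hp => ?_
        have e1 : k - (n + 1) - p = k - (n + 1 + p) := by omega
        have e2 : l - (n + 1) - p = l - (n + 1 + p) := by omega
        rw [e1, e2, hKin, smul_mul_assoc, mul_assoc]
      rw [h0, hA]
      -- regroup:  B - (A1 + H) = (B - A1) - H
      rw [sub_add_eq_sub_sub, ← Finset.sum_sub_distrib]
      -- convert `range N` sums to `Icc 1 N` sums
      rw [show (∑ n ∈ range N,
            (((RatFunc.X : RatFunc ℚ) ^ (((n + 1 : ℕ) : ℤ) * ((k : ℤ) - l)) * ν (n + 1)) •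
              (K ^ (n + 1) * (f (k - (n + 1)) * e (l - (n + 1))))
            - ((RatFunc.X : RatFunc ℚ) ^ (((n + 1 : ℕ) : ℤ) * ((l : ℤ) - k)) * ν (n + 1)) •
              (Kinv ^ (n + 1) * (f (k - (n + 1)) * e (l - (n + 1))))))
          = ∑ m ∈ Icc 1 N,
            (((RatFunc.X : RatFunc ℚ) ^ ((m : ℤ) * ((k : ℤ) - l)) * ν m) •
              (K ^ m * (f (k - m) * e (l - m)))
            - ((RatFunc.X : RatFunc ℚ) ^ ((m : ℤ) * ((l : ℤ) - k)) * ν m) •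
              (Kinv ^ m * (f (k - m) * e (l - m))))
          from (sum_Icc_one_eq_sum_range N (fun m =>
            ((RatFunc.X : RatFunc ℚ) ^ ((m : ℤ) * ((k : ℤ) - l)) * ν m) •
              (K ^ m * (f (k - m) * e (l - m)))
            - ((RatFunc.X : RatFunc ℚ) ^ ((m : ℤ) * ((l : ℤ) - k)) * ν m) •
              (Kinv ^ m * (f (k - m) * e (l - m))))).symm]
      rw [show (∑ n ∈ range N, ∑ p ∈ Icc 1 (N - (n + 1)),
            (((RatFunc.X : RatFunc ℚ) ^ (((n + 1 : ℕ) : ℤ) * ((l : ℤ) - k)) * ν (n + 1)) •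
              (Kz u (-((n + 1 : ℕ) : ℤ)) * Cc u ν ((k : ℤ) - l) p)) *
              (f (k - ((n + 1) + p)) * e (l - ((n + 1) + p))))
          = ∑ m ∈ Icc 1 N, ∑ p ∈ Icc 1 (N - m),
            (((RatFunc.X : RatFunc ℚ) ^ ((m : ℤ) * ((l : ℤ) - k)) * ν m) •
              (Kz u (-(m : ℤ)) * Cc u ν ((k : ℤ) - l) p)) *
              (f (k - (m + p)) * e (l - (m + p)))
          from (sum_Icc_one_eq_sum_range N (fun m => ∑ p ∈ Icc 1 (N - m),
            (((RatFunc.X : RatFunc ℚ) ^ ((m : ℤ) * ((l : ℤ) - k)) * ν m) •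
              (Kz u (-(m : ℤ)) * Cc u ν ((k : ℤ) - l) p)) *
              (f (k - (m + p)) * e (l - (m + p))))).symm]
      -- reindex the double sum
      rw [sum_pair_reindex N (fun m p =>
            (((RatFunc.X : RatFunc ℚ) ^ ((m : ℤ) * ((l : ℤ) - k)) * ν m) •
              (Kz u (-(m : ℤ)) * Cc u ν ((k : ℤ) - l) p)) *
              (f (k - (m + p)) * e (l - (m + p))))]
      rw [hN, ← Finset.sum_sub_distrib]
      refine Finset.sum_congr rfl fun P hP => ?_
      simp only [Finset.mem_Icc] at hP
      -- rewrite inner indices m + (P - m) = P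
      rw [show (∑ m ∈ Icc 1 (P - 1),
            (((RatFunc.X : RatFunc ℚ) ^ ((m : ℤ) * ((l : ℤ) - k)) * ν m) •
              (Kz u (-(m : ℤ)) * Cc u ν ((k : ℤ) - l) (P - m))) *
              (f (k - (m + (P - m))) * e (l - (m + (P - m)))))
          = ∑ m ∈ Icc 1 (P - 1),
            (((RatFunc.X : RatFunc ℚ) ^ ((m : ℤ) * ((l : ℤ) - k)) * ν m) •
              (Kz u (-(m : ℤ)) * Cc u ν ((k : ℤ) - l) (P - m))) *
              (f (k - P) * e (l - P))
          from Finset.sum_congr rfl fun m hm => by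
            simp only [Finset.mem_Icc] at hm
            congr 3 <;> omega]
      rw [← Finset.sum_mul]
      rw [hKn P, hKin P, ← smul_mul_assoc, ← smul_mul_assoc, ← sub_mul, ← sub_mul]
      congr 1
      exact (Cc_key u ν (k : ℤ) (l : ℤ) P hP.1).symm
  intro k l hk hl
  rw [main (min k l) k l rfl]
  refine Finset.sum_congr rfl fun p hp => ?_
  congr 1
  simp only [Cc, hKz]
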